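/- Fix positive integers n, k and parameters η₁, η₂ > 0 and σ_u², σ_v² ≥ 0. Let {s_{t,j}}, {e_{t,j}}, {r_{t,j}}, {e1_{t,j}}, {cu_{t,j}} (for t = 1,…,k and j = 0,…,n−1) and {e2_j}, {cv_j} (for j = 0,…,n−1) be mutually independent real-valued random variables with mean 0 and finite variance, where Var(s_{t,j}) = Var(e_{t,j}) = Var(r_{t,j}) = η₁/2, Var(e1_{t,j}) = Var(e2_j) = η₂/2, Var(cu_{t,j}) = σ_u², and Var(cv_j) = σ_v². For sequences a = (a_j), b = (b_j) let (a ⊛ b)_i = Σ_{j=0}^{n−1} ε(i,j) a_{(i−j) mod n} b_j denote the negacyclic convolution, where ε(i,j) = 1 if j ≤ i and −1 if j > i. Define the decoding-noise coefficient n_{e,i} = Σ_{t=1}^{k} (e_t ⊛ r_t)_i + e2_i + cv_i − Σ_{t=1}^{k} (s_t ⊛ (e1_t + cu_t))_i. Then E[n_{e,i}] = 0 and Var(n_{e,i}) = k·n·η₁²/4 + (k·n·η₁/2)·(η₂/2 + σ_u²) + η₂/2 + σ_v² for every i ∈ {0,…,n−1}. -/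

import Mathlib

open MeasureTheory ProbabilityTheory

/-- The `i`-th coefficient of the negacyclic convolution of two real-valued random
sequences: `(a ⊛ b)_i = ∑_{j=0}^{n-1} ε(i,j) a_{(i-j) mod n} b_j`, where `ε(i,j) = 1`
if `j ≤ i` and `ε(i,j) = -1` if `j > i`. -/
noncomputable def nconv {Ω : Type*} {n : ℕ} (a b : Fin n → Ω → ℝ) (i : Fin n) (ω : Ω) : ℝ :=
  ∑ j : Fin n, (if (j : ℕ) ≤ (i : ℕ) then (1 : ℝ) else -1) * a (i - j) ω * b j ω

/-- The `i`-th Kyber decoding-noise coefficient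
`n_{e,i} = ∑_t (e_t ⊛ r_t)_i + e2_i + cv_i − ∑_t (s_t ⊛ (e1_t + cu_t))_i`. -/
noncomputable def kyberNoise {Ω : Type*} {k n : ℕ}
    (s e r e1 cu : Fin k → Fin n → Ω → ℝ) (e2 cv : Fin n → Ω → ℝ)
    (i : Fin n) (ω : Ω) : ℝ :=
  (∑ t : Fin k, nconv (e t) (r t) i ω) + e2 i ω + cv i ω
    - ∑ t : Fin k, nconv (s t) (fun j ω' => e1 t j ω' + cu t j ω') i ω

set_option linter.unusedSectionVars false

section KyberAux

variable {Ω ι : Type*} [MeasurableSpace Ω] {P : Measure Ω} [IsProbabilityMeasure P]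
  {F : ι → Ω → ℝ}

lemma kn_integrable_mul {f g : Ω → ℝ} (hf : MemLp f 2 P) (hg : MemLp g 2 P) :
    Integrable (fun ω => f ω * g ω) P := by
  have hb : Integrable (fun ω => f ω ^ 2 + g ω ^ 2) P := hf.integrable_sq.add hg.integrable_sq
  refine hb.mono' (hf.aestronglyMeasurable.mul hg.aestronglyMeasurable) (ae_of_all _ fun ω => ?_)
  rw [Real.norm_eq_abs, abs_mul]
  nlinarith [sq_abs (f ω), sq_abs (g ω), sq_nonneg (|f ω| - |g ω|), abs_nonneg (f ω),
    abs_nonneg (g ω)]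

lemma kn_sq_int (hL2 : ∀ x, MemLp (F x) 2 P) (hmean : ∀ x, (∫ ω, F x ω ∂P) = 0) (x : ι) :
    ∫ ω, F x ω ^ 2 ∂P = variance (F x) P := by
  have h := variance_eq_sub (hL2 x)
  rw [hmean x] at h
  simpa using h.symm

lemma kn_pair_zero (hind : iIndepFun F P)
    (hmeas : ∀ x, Measurable (F x)) (hmean : ∀ x, (∫ ω, F x ω ∂P) = 0)
    {a b : ι} (hab : a ≠ b) : ∫ ω, F a ω * F b ω ∂P = 0 := by
  have h := (hind.indepFun hab).integral_mul_eq_mul_integral (hmeas a).aestronglyMeasurable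
    (hmeas b).aestronglyMeasurable
  rw [hmean a, zero_mul] at h
  exact h

lemma kn_quad (hind : iIndepFun F P)
    (hmeas : ∀ x, Measurable (F x)) (hmean : ∀ x, (∫ ω, F x ω ∂P) = 0)
    {a b a' b' : ι} (h1 : a ≠ a') (h2 : a ≠ b') (h3 : b ≠ a') (h4 : b ≠ b') (h5 : a ≠ b) :
    ∫ ω, (F a ω * F b ω) * (F a' ω * F b' ω) ∂P = 0 := by
  have h := (hind.indepFun_mul_mul hmeas a b a' b' h1 h2 h3 h4).integral_mul_eq_mul_integral
    ((hmeas a).mul (hmeas b)).aestronglyMeasurable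
    ((hmeas a').mul (hmeas b')).aestronglyMeasurable
  have h0 : ∫ ω, F a ω * F b ω ∂P = 0 := kn_pair_zero hind hmeas hmean h5
  rw [show (∫ ω, (F a ω * F b ω) * (F a' ω * F b' ω) ∂P)
      = ∫ ω, ((F a * F b) * (F a' * F b')) ω ∂P from rfl]
  rw [show (∫ ω, ((F a * F b) * (F a' * F b')) ω ∂P) = (∫ ω, (F a * F b) ω ∂P) * ∫ ω, (F a' * F b') ω ∂P from h]
  rw [show (∫ ω, (F a * F b) ω ∂P) = (0:ℝ) from h0, zero_mul]

lemma kn_triple_id (hind : iIndepFun F P)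
    (hmeas : ∀ x, Measurable (F x)) (hmean : ∀ x, (∫ ω, F x ω ∂P) = 0)
    {x b b' : ι} (h1 : x ≠ b) (h2 : x ≠ b') (h3 : b ≠ b') :
    ∫ ω, F x ω * (F b ω * F b' ω) ∂P = 0 := by
  have hi : IndepFun (F x) (F b * F b') P := hind.indepFun_mul_right hmeas x b b' h1 h2
  have h := hi.integral_mul_eq_mul_integral (hmeas x).aestronglyMeasurable
    ((hmeas b).mul (hmeas b')).aestronglyMeasurable
  have h0 : ∫ ω, F b ω * F b' ω ∂P = 0 := kn_pair_zero hind hmeas hmean h3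
  rw [show (∫ ω, F x ω * (F b ω * F b' ω) ∂P) = ∫ ω, (F x * (F b * F b')) ω ∂P from rfl]
  rw [show (∫ ω, (F x * (F b * F b')) ω ∂P) = (∫ ω, F x ω ∂P) * ∫ ω, (F b * F b') ω ∂P from h]
  rw [show (∫ ω, (F b * F b') ω ∂P) = (0:ℝ) from h0, mul_zero]

lemma kn_triple_sq (hind : iIndepFun F P)
    (hmeas : ∀ x, Measurable (F x)) (hmean : ∀ x, (∫ ω, F x ω ∂P) = 0)
    {x b b' : ι} (h1 : x ≠ b) (h2 : x ≠ b') (h3 : b ≠ b') :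
    ∫ ω, F x ω ^ 2 * (F b ω * F b' ω) ∂P = 0 := by
  have hi : IndepFun ((fun y : ℝ => y ^ 2) ∘ F x) (id ∘ (F b * F b')) P :=
    (hind.indepFun_mul_right hmeas x b b' h1 h2).comp (measurable_id.pow_const 2) measurable_id
  have h := hi.integral_mul_eq_mul_integral ((hmeas x).pow_const 2).aestronglyMeasurable
    ((hmeas b).mul (hmeas b')).aestronglyMeasurable
  have h0 : ∫ ω, F b ω * F b' ω ∂P = 0 := kn_pair_zero hind hmeas hmean h3
  rw [show (∫ ω, F x ω ^ 2 * (F b ω * F b' ω) ∂P)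
      = ∫ ω, (((fun y : ℝ => y ^ 2) ∘ F x) * (id ∘ (F b * F b'))) ω ∂P from rfl]
  rw [show (∫ ω, (((fun y : ℝ => y ^ 2) ∘ F x) * (id ∘ (F b * F b'))) ω ∂P)
      = (∫ ω, F x ω ^ 2 ∂P) * ∫ ω, F b ω * F b' ω ∂P from h]
  rw [h0, mul_zero]

lemma kn_sq_pair (hind : iIndepFun F P)
    (hmeas : ∀ x, Measurable (F x)) (hL2 : ∀ x, MemLp (F x) 2 P)
    (hmean : ∀ x, (∫ ω, F x ω ∂P) = 0) {a b : ι} (hab : a ≠ b) :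
    ∫ ω, (F a ω * F b ω) ^ 2 ∂P = variance (F a) P * variance (F b) P := by
  have hi : IndepFun ((fun y : ℝ => y ^ 2) ∘ F a) ((fun y : ℝ => y ^ 2) ∘ F b) P :=
    (hind.indepFun hab).comp (measurable_id.pow_const 2) (measurable_id.pow_const 2)
  have h := hi.integral_mul_eq_mul_integral ((hmeas a).pow_const 2).aestronglyMeasurable
    ((hmeas b).pow_const 2).aestronglyMeasurable
  have e : (fun ω => (F a ω * F b ω) ^ 2)
      = (((fun y : ℝ => y ^ 2) ∘ F a) * ((fun y : ℝ => y ^ 2) ∘ F b)) := by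
    funext ω; simp [mul_pow]
  rw [show (∫ ω, (F a ω * F b ω) ^ 2 ∂P)
      = ∫ ω, (((fun y : ℝ => y ^ 2) ∘ F a) * ((fun y : ℝ => y ^ 2) ∘ F b)) ω ∂P from by rw [← e]]
  rw [show (∫ ω, (((fun y : ℝ => y ^ 2) ∘ F a) * ((fun y : ℝ => y ^ 2) ∘ F b)) ω ∂P)
      = (∫ ω, F a ω ^ 2 ∂P) * ∫ ω, F b ω ^ 2 ∂P from h]
  rw [kn_sq_int hL2 hmean a, kn_sq_int hL2 hmean b]

lemma kn_memL2_mul (hind : iIndepFun F P)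
    (hmeas : ∀ x, Measurable (F x)) (hL2 : ∀ x, MemLp (F x) 2 P)
    {a b : ι} (hab : a ≠ b) :
    MemLp (fun ω => F a ω * F b ω) 2 P := by
  rw [memLp_two_iff_integrable_sq (show AEStronglyMeasurable (fun ω => F a ω * F b ω) P from
    ((hmeas a).mul (hmeas b)).aestronglyMeasurable)]
  have hi : IndepFun ((fun y : ℝ => y ^ 2) ∘ F a) ((fun y : ℝ => y ^ 2) ∘ F b) P :=
    (hind.indepFun hab).comp (measurable_id.pow_const 2) (measurable_id.pow_const 2)
  have h := hi.integrable_mul (hL2 a).integrable_sq (hL2 b).integrable_sq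
  have e : (fun ω => (F a ω * F b ω) ^ 2)
      = (((fun y : ℝ => y ^ 2) ∘ F a) * ((fun y : ℝ => y ^ 2) ∘ F b)) := by
    funext ω; simp [mul_pow]
  rw [e]
  exact h

end KyberAux
section KyberSum

variable {Ω ι : Type*} [MeasurableSpace Ω] {P : Measure Ω} [IsProbabilityMeasure P]
  {F : ι → Ω → ℝ}

lemma kn_sum_stats {M : Type*} [Fintype M] [DecidableEq M]
    (hind : iIndepFun F P)
    (hmeas : ∀ x, Measurable (F x)) (hL2 : ∀ x, MemLp (F x) 2 P)
    (hmean : ∀ x, (∫ ω, F x ω ∂P) = 0)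
    (A B : M → ι) (c : M → ℝ) (hAB : ∀ m m', A m ≠ B m') (hBinj : Function.Injective B) :
    (∫ ω, (∑ m, c m * (F (A m) ω * F (B m) ω)) ∂P) = 0 ∧
    MemLp (fun ω => ∑ m, c m * (F (A m) ω * F (B m) ω)) 2 P ∧
    (∫ ω, (∑ m, c m * (F (A m) ω * F (B m) ω)) ^ 2 ∂P)
      = ∑ m, (c m) ^ 2 * (variance (F (A m)) P * variance (F (B m)) P) := by
  have hterm2 : ∀ m : M, MemLp (fun ω => c m * (F (A m) ω * F (B m) ω)) 2 P :=
    fun m => (kn_memL2_mul hind hmeas hL2 (hAB m m)).const_mul (c m)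
  have hterm1 : ∀ m : M, Integrable (fun ω => c m * (F (A m) ω * F (B m) ω)) P :=
    fun m => (hterm2 m).integrable one_le_two
  have hmem : MemLp (fun ω => ∑ m, c m * (F (A m) ω * F (B m) ω)) 2 P :=
    memLp_finset_sum _ fun m _ => hterm2 m
  refine ⟨?_, hmem, ?_⟩
  · rw [integral_finset_sum _ fun m _ => hterm1 m]
    refine Finset.sum_eq_zero fun m _ => ?_
    rw [integral_const_mul, kn_pair_zero hind hmeas hmean (hAB m m), mul_zero]
  · have key : ∀ m m' : M,
        (∫ ω, (c m * (F (A m) ω * F (B m) ω)) * (c m' * (F (A m') ω * F (B m') ω)) ∂P)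
          = if m = m' then (c m) ^ 2 * (variance (F (A m)) P * variance (F (B m)) P) else 0 := by
      intro m m'
      by_cases hmm : m = m'
      · subst hmm
        rw [if_pos rfl]
        have e : (fun ω => (c m * (F (A m) ω * F (B m) ω)) * (c m * (F (A m) ω * F (B m) ω)))
            = fun ω => (c m) ^ 2 * (F (A m) ω * F (B m) ω) ^ 2 := by funext ω; ring
        rw [e, integral_const_mul, kn_sq_pair hind hmeas hL2 hmean (hAB m m)]
      · rw [if_neg hmm]
        have hbb : B m ≠ B m' := fun h => hmm (hBinj h)
        by_cases haa : A m = A m'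
        · have e : (fun ω => (c m * (F (A m) ω * F (B m) ω)) * (c m' * (F (A m') ω * F (B m') ω)))
              = fun ω => (c m * c m') * (F (A m') ω ^ 2 * (F (B m) ω * F (B m') ω)) := by
            funext ω; rw [haa]; ring
          rw [e, integral_const_mul,
            kn_triple_sq hind hmeas hmean (hAB m' m) (hAB m' m') hbb, mul_zero]
        · have e : (fun ω => (c m * (F (A m) ω * F (B m) ω)) * (c m' * (F (A m') ω * F (B m') ω)))
              = fun ω => (c m * c m') * ((F (A m) ω * F (B m) ω) * (F (A m') ω * F (B m') ω)) := by
            funext ω; ring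
          rw [e, integral_const_mul,
            kn_quad hind hmeas hmean haa (hAB m m') (Ne.symm (hAB m' m)) hbb (hAB m m), mul_zero]
    have hsq : (fun ω => (∑ m, c m * (F (A m) ω * F (B m) ω)) ^ 2)
        = fun ω => ∑ m, ∑ m',
            (c m * (F (A m) ω * F (B m) ω)) * (c m' * (F (A m') ω * F (B m') ω)) := by
      funext ω; rw [sq, Finset.sum_mul_sum]
    rw [show (∫ ω, (∑ m, c m * (F (A m) ω * F (B m) ω)) ^ 2 ∂P)
        = ∫ ω, ∑ m, ∑ m',
            (c m * (F (A m) ω * F (B m) ω)) * (c m' * (F (A m') ω * F (B m') ω)) ∂P from by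
      rw [← hsq]]
    rw [integral_finset_sum _ fun m _ =>
      integrable_finset_sum _ fun m' _ => kn_integrable_mul (hterm2 m) (hterm2 m')]
    refine Finset.sum_congr rfl fun m _ => ?_
    rw [integral_finset_sum _ fun m' _ => kn_integrable_mul (hterm2 m) (hterm2 m')]
    simp only [key]
    simp

lemma kn_sum_cross {M : Type*} [Fintype M]
    (hind : iIndepFun F P)
    (hmeas : ∀ x, Measurable (F x)) (hL2 : ∀ x, MemLp (F x) 2 P)
    (hmean : ∀ x, (∫ ω, F x ω ∂P) = 0)
    (A B : M → ι) (c : M → ℝ) (hAB : ∀ m m', A m ≠ B m')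
    (x : ι) (hxA : ∀ m, x ≠ A m) (hxB : ∀ m, x ≠ B m) :
    ∫ ω, (∑ m, c m * (F (A m) ω * F (B m) ω)) * F x ω ∂P = 0 := by
  have hint : ∀ m : M, Integrable (fun ω => c m * (F x ω * (F (A m) ω * F (B m) ω))) P :=
    fun m => (kn_integrable_mul (hL2 x)
      (kn_memL2_mul hind hmeas hL2 (hAB m m))).const_mul (c m)
  have e : (fun ω => (∑ m, c m * (F (A m) ω * F (B m) ω)) * F x ω)
      = fun ω => ∑ m, c m * (F x ω * (F (A m) ω * F (B m) ω)) := by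
    funext ω
    rw [Finset.sum_mul]
    exact Finset.sum_congr rfl fun m _ => by ring
  rw [show (∫ ω, (∑ m, c m * (F (A m) ω * F (B m) ω)) * F x ω ∂P)
      = ∫ ω, ∑ m, c m * (F x ω * (F (A m) ω * F (B m) ω)) ∂P from by rw [← e]]
  rw [integral_finset_sum _ fun m _ => hint m]
  refine Finset.sum_eq_zero fun m _ => ?_
  rw [integral_const_mul, kn_triple_id hind hmeas hmean (hxA m) (hxB m) (hAB m m), mul_zero]

end KyberSum

section KyberTotal

variable {Ω : Type*} [MeasurableSpace Ω] {P : Measure Ω} [IsProbabilityMeasure P]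

lemma kn_total (S X Y : Ω → ℝ) (hS : MemLp S 2 P) (hX : MemLp X 2 P) (hY : MemLp Y 2 P)
    (hSm : (∫ ω, S ω ∂P) = 0) (hXm : (∫ ω, X ω ∂P) = 0) (hYm : (∫ ω, Y ω ∂P) = 0)
    (hSX : (∫ ω, S ω * X ω ∂P) = 0) (hSY : (∫ ω, S ω * Y ω ∂P) = 0)
    (hXY : (∫ ω, X ω * Y ω ∂P) = 0) :
    ((∫ ω, (S ω + (X ω + Y ω)) ∂P) = 0) ∧
      variance (fun ω => S ω + (X ω + Y ω)) P
        = (∫ ω, S ω ^ 2 ∂P) + (∫ ω, X ω ^ 2 ∂P) + ∫ ω, Y ω ^ 2 ∂P := by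
  have iS : Integrable S P := hS.integrable one_le_two
  have iX : Integrable X P := hX.integrable one_le_two
  have iY : Integrable Y P := hY.integrable one_le_two
  have iXY : Integrable (fun ω => X ω + Y ω) P := iX.add iY
  have hmean0 : (∫ ω, (S ω + (X ω + Y ω)) ∂P) = 0 := by
    rw [integral_add iS iXY, integral_add iX iY, hSm, hXm, hYm]; ring
  refine ⟨hmean0, ?_⟩
  have hmem : MemLp (fun ω => S ω + (X ω + Y ω)) 2 P := hS.add (hX.add hY)
  rw [variance_eq_sub hmem, hmean0]
  have i1 : Integrable (fun ω => S ω ^ 2) P := hS.integrable_sq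
  have i2 : Integrable (fun ω => X ω ^ 2) P := hX.integrable_sq
  have i3 : Integrable (fun ω => Y ω ^ 2) P := hY.integrable_sq
  have i4 : Integrable (fun ω => 2 * (S ω * X ω)) P := (kn_integrable_mul hS hX).const_mul 2
  have i5 : Integrable (fun ω => 2 * (S ω * Y ω)) P := (kn_integrable_mul hS hY).const_mul 2
  have i6 : Integrable (fun ω => 2 * (X ω * Y ω)) P := (kn_integrable_mul hX hY).const_mul 2
  have i63 : Integrable (fun ω => 2 * (X ω * Y ω) + Y ω ^ 2) P := i6.add i3
  have i263 : Integrable (fun ω => X ω ^ 2 + (2 * (X ω * Y ω) + Y ω ^ 2)) P := i2.add i63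
  have i5263 : Integrable (fun ω => 2 * (S ω * Y ω) + (X ω ^ 2 + (2 * (X ω * Y ω) + Y ω ^ 2))) P :=
    i5.add i263
  have i45263 : Integrable (fun ω => 2 * (S ω * X ω)
      + (2 * (S ω * Y ω) + (X ω ^ 2 + (2 * (X ω * Y ω) + Y ω ^ 2)))) P := i4.add i5263
  have e : ((fun ω => S ω + (X ω + Y ω)) ^ 2 : Ω → ℝ)
      = fun ω => S ω ^ 2 + (2 * (S ω * X ω) + (2 * (S ω * Y ω)
          + (X ω ^ 2 + (2 * (X ω * Y ω) + Y ω ^ 2)))) := by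
    funext ω; simp only [Pi.pow_apply]; ring
  rw [e]
  simp only []
  rw [integral_add i1 i45263, integral_add i4 i5263, integral_add i5 i263,
    integral_add i2 i63, integral_add i6 i3,
    integral_const_mul 2, integral_const_mul 2, integral_const_mul 2, hSX, hSY, hXY]
  ring

end KyberTotal

section KyberDefs

def knFam1 : Fin 3 → Fin 5 := ![1, 0, 0]
def knFam2 : Fin 3 → Fin 5 := ![2, 3, 4]
noncomputable def knSgn : Fin 3 → ℝ := ![1, -1, -1]

@[simp] lemma knFam1_0 : knFam1 0 = 1 := rfl
@[simp] lemma knFam1_1 : knFam1 1 = 0 := rfl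
@[simp] lemma knFam1_2 : knFam1 2 = 0 := rfl
@[simp] lemma knFam2_0 : knFam2 0 = 2 := rfl
@[simp] lemma knFam2_1 : knFam2 1 = 3 := rfl
@[simp] lemma knFam2_2 : knFam2 2 = 4 := rfl
@[simp] lemma knSgn_0 : knSgn 0 = 1 := rfl
@[simp] lemma knSgn_1 : knSgn 1 = -1 := rfl
@[simp] lemma knSgn_2 : knSgn 2 = -1 := rfl

lemma knFam_disj : ∀ a b : Fin 3, knFam1 a ≠ knFam2 b := by decide
lemma knFam2_inj : Function.Injective knFam2 := by decide

variable {Ω : Type*} {k n : ℕ}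

noncomputable def knF (s e r e1 cu : Fin k → Fin n → Ω → ℝ) (e2 cv : Fin n → Ω → ℝ) :
    ((Fin 5 × Fin k × Fin n) ⊕ (Fin 2 × Fin n)) → Ω → ℝ :=
  Sum.elim (fun x : Fin 5 × Fin k × Fin n => ![s, e, r, e1, cu] x.1 x.2.1 x.2.2)
    (fun x : Fin 2 × Fin n => ![e2, cv] x.1 x.2)

variable {s e r e1 cu : Fin k → Fin n → Ω → ℝ} {e2 cv : Fin n → Ω → ℝ}

@[simp] lemma knF_s (t : Fin k) (j : Fin n) :
    knF s e r e1 cu e2 cv (Sum.inl (0, t, j)) = s t j := rfl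
@[simp] lemma knF_e (t : Fin k) (j : Fin n) :
    knF s e r e1 cu e2 cv (Sum.inl (1, t, j)) = e t j := rfl
@[simp] lemma knF_r (t : Fin k) (j : Fin n) :
    knF s e r e1 cu e2 cv (Sum.inl (2, t, j)) = r t j := rfl
@[simp] lemma knF_e1 (t : Fin k) (j : Fin n) :
    knF s e r e1 cu e2 cv (Sum.inl (3, t, j)) = e1 t j := rfl
@[simp] lemma knF_cu (t : Fin k) (j : Fin n) :
    knF s e r e1 cu e2 cv (Sum.inl (4, t, j)) = cu t j := rfl
@[simp] lemma knF_e2 (j : Fin n) :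
    knF s e r e1 cu e2 cv (Sum.inr (0, j)) = e2 j := rfl
@[simp] lemma knF_cv (j : Fin n) :
    knF s e r e1 cu e2 cv (Sum.inr (1, j)) = cv j := rfl

end KyberDefs


/-- Second-moment analysis of the Kyber decoding noise: each coefficient `n_{e,i}` has
mean `0` and variance `k·n·η₁²/4 + (k·n·η₁/2)·(η₂/2 + σᵤ²) + η₂/2 + σᵥ²`. -/
theorem kyberNoise_mean_variance
    {Ω : Type*} [MeasurableSpace Ω] (P : Measure Ω) [IsProbabilityMeasure P]
    (n k : ℕ) (hn : 0 < n) (hk : 0 < k)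
    (η₁ η₂ : ℝ) (hη₁ : 0 < η₁) (hη₂ : 0 < η₂)
    (σu2 σv2 : ℝ) (hσu2 : 0 ≤ σu2) (hσv2 : 0 ≤ σv2)
    (s e r e1 cu : Fin k → Fin n → Ω → ℝ) (e2 cv : Fin n → Ω → ℝ)
    (hmeas : ∀ t j, Measurable (s t j) ∧ Measurable (e t j) ∧ Measurable (r t j) ∧
      Measurable (e1 t j) ∧ Measurable (cu t j))
    (hmeas' : ∀ j, Measurable (e2 j) ∧ Measurable (cv j))
    (hL2 : ∀ t j, MemLp (s t j) 2 P ∧ MemLp (e t j) 2 P ∧ MemLp (r t j) 2 P ∧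
      MemLp (e1 t j) 2 P ∧ MemLp (cu t j) 2 P)
    (hL2' : ∀ j, MemLp (e2 j) 2 P ∧ MemLp (cv j) 2 P)
    (hmean : ∀ t j, (∫ ω, s t j ω ∂P) = 0 ∧ (∫ ω, e t j ω ∂P) = 0 ∧
      (∫ ω, r t j ω ∂P) = 0 ∧ (∫ ω, e1 t j ω ∂P) = 0 ∧ (∫ ω, cu t j ω ∂P) = 0)
    (hmean' : ∀ j, (∫ ω, e2 j ω ∂P) = 0 ∧ (∫ ω, cv j ω ∂P) = 0)
    (hvar : ∀ t j, variance (s t j) P = η₁ / 2 ∧ variance (e t j) P = η₁ / 2 ∧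
      variance (r t j) P = η₁ / 2 ∧ variance (e1 t j) P = η₂ / 2 ∧
      variance (cu t j) P = σu2)
    (hvar' : ∀ j, variance (e2 j) P = η₂ / 2 ∧ variance (cv j) P = σv2)
    (hindep : iIndepFun
        (Sum.elim (fun x : Fin 5 × Fin k × Fin n => ![s, e, r, e1, cu] x.1 x.2.1 x.2.2)
        (fun x : Fin 2 × Fin n => ![e2, cv] x.1 x.2)) P)
    (i : Fin n) :
    (∫ ω, kyberNoise s e r e1 cu e2 cv i ω ∂P) = 0 ∧
      variance (kyberNoise s e r e1 cu e2 cv i) P =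
        (k : ℝ) * n * η₁ ^ 2 / 4 + ((k : ℝ) * n * η₁ / 2) * (η₂ / 2 + σu2)
          + η₂ / 2 + σv2 := by
  classical
  have hind : iIndepFun (knF s e r e1 cu e2 cv) P := hindep
  have hFmeas : ∀ x, Measurable (knF s e r e1 cu e2 cv x) := by
    rintro (⟨c5, t, j⟩ | ⟨c2, j⟩)
    · fin_cases c5
      · exact (hmeas t j).1
      · exact (hmeas t j).2.1
      · exact (hmeas t j).2.2.1
      · exact (hmeas t j).2.2.2.1
      · exact (hmeas t j).2.2.2.2
    · fin_cases c2
      · exact (hmeas' j).1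
      · exact (hmeas' j).2
  have hFL2 : ∀ x, MemLp (knF s e r e1 cu e2 cv x) 2 P := by
    rintro (⟨c5, t, j⟩ | ⟨c2, j⟩)
    · fin_cases c5
      · exact (hL2 t j).1
      · exact (hL2 t j).2.1
      · exact (hL2 t j).2.2.1
      · exact (hL2 t j).2.2.2.1
      · exact (hL2 t j).2.2.2.2
    · fin_cases c2
      · exact (hL2' j).1
      · exact (hL2' j).2
  have hFmean : ∀ x, (∫ ω, knF s e r e1 cu e2 cv x ω ∂P) = 0 := by
    rintro (⟨c5, t, j⟩ | ⟨c2, j⟩)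
    · fin_cases c5
      · exact (hmean t j).1
      · exact (hmean t j).2.1
      · exact (hmean t j).2.2.1
      · exact (hmean t j).2.2.2.1
      · exact (hmean t j).2.2.2.2
    · fin_cases c2
      · exact (hmean' j).1
      · exact (hmean' j).2
  -- index data for the quadratic part
  have hAB : ∀ m m' : Fin 3 × Fin k × Fin n,
      (Sum.inl (knFam1 m.1, m.2.1, i - m.2.2) :
        (Fin 5 × Fin k × Fin n) ⊕ (Fin 2 × Fin n))
      ≠ Sum.inl (knFam2 m'.1, m'.2.1, m'.2.2) := by
    intro m m' h
    rw [Sum.inl.injEq, Prod.mk.injEq] at h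
    exact knFam_disj m.1 m'.1 h.1
  have hBinj : Function.Injective (fun m : Fin 3 × Fin k × Fin n =>
      (Sum.inl (knFam2 m.1, m.2.1, m.2.2) :
        (Fin 5 × Fin k × Fin n) ⊕ (Fin 2 × Fin n))) := by
    rintro ⟨c1, t, j⟩ ⟨c1', t', j'⟩ h
    simp only [Sum.inl.injEq, Prod.mk.injEq] at h
    obtain ⟨h1, h2, h3⟩ := h
    have hc : c1 = c1' := knFam2_inj h1
    subst hc; subst h2; subst h3; rfl
  obtain ⟨hSmean, hSL2, hSsq⟩ := kn_sum_stats hind hFmeas hFL2 hFmean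
    (fun m : Fin 3 × Fin k × Fin n =>
      (Sum.inl (knFam1 m.1, m.2.1, i - m.2.2) :
        (Fin 5 × Fin k × Fin n) ⊕ (Fin 2 × Fin n)))
    (fun m : Fin 3 × Fin k × Fin n =>
      (Sum.inl (knFam2 m.1, m.2.1, m.2.2) :
        (Fin 5 × Fin k × Fin n) ⊕ (Fin 2 × Fin n)))
    (fun m : Fin 3 × Fin k × Fin n =>
      (if ((m.2.2 : Fin n) : ℕ) ≤ ((i : Fin n) : ℕ) then (1 : ℝ) else -1) * knSgn m.1)
    hAB hBinj
  -- cross terms with e2 and cv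
  have hcross_e2 := kn_sum_cross hind hFmeas hFL2 hFmean
    (fun m : Fin 3 × Fin k × Fin n =>
      (Sum.inl (knFam1 m.1, m.2.1, i - m.2.2) :
        (Fin 5 × Fin k × Fin n) ⊕ (Fin 2 × Fin n)))
    (fun m : Fin 3 × Fin k × Fin n =>
      (Sum.inl (knFam2 m.1, m.2.1, m.2.2) :
        (Fin 5 × Fin k × Fin n) ⊕ (Fin 2 × Fin n)))
    (fun m : Fin 3 × Fin k × Fin n =>
      (if ((m.2.2 : Fin n) : ℕ) ≤ ((i : Fin n) : ℕ) then (1 : ℝ) else -1) * knSgn m.1)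
    hAB (Sum.inr ((0 : Fin 2), i)) (fun m => by simp) (fun m => by simp)
  rw [knF_e2 i] at hcross_e2
  have hcross_cv := kn_sum_cross hind hFmeas hFL2 hFmean
    (fun m : Fin 3 × Fin k × Fin n =>
      (Sum.inl (knFam1 m.1, m.2.1, i - m.2.2) :
        (Fin 5 × Fin k × Fin n) ⊕ (Fin 2 × Fin n)))
    (fun m : Fin 3 × Fin k × Fin n =>
      (Sum.inl (knFam2 m.1, m.2.1, m.2.2) :
        (Fin 5 × Fin k × Fin n) ⊕ (Fin 2 × Fin n)))
    (fun m : Fin 3 × Fin k × Fin n =>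
      (if ((m.2.2 : Fin n) : ℕ) ≤ ((i : Fin n) : ℕ) then (1 : ℝ) else -1) * knSgn m.1)
    hAB (Sum.inr ((1 : Fin 2), i)) (fun m => by simp) (fun m => by simp)
  rw [knF_cv i] at hcross_cv
  -- e2/cv second moments and cross
  have hpe2 : ∫ ω, e2 i ω ^ 2 ∂P = η₂ / 2 := by
    have h := kn_sq_int hFL2 hFmean (Sum.inr ((0 : Fin 2), i))
    rw [knF_e2 i] at h
    rw [h, (hvar' i).1]
  have hpcv : ∫ ω, cv i ω ^ 2 ∂P = σv2 := by
    have h := kn_sq_int hFL2 hFmean (Sum.inr ((1 : Fin 2), i))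
    rw [knF_cv i] at h
    rw [h, (hvar' i).2]
  have hpe2cv : ∫ ω, e2 i ω * cv i ω ∂P = 0 := by
    have h := kn_pair_zero hind hFmeas hFmean
      (a := Sum.inr ((0 : Fin 2), i)) (b := Sum.inr ((1 : Fin 2), i)) (by simp)
    rw [knF_e2 i, knF_cv i] at h
    exact h
  -- value of the quadratic sum
  have hSsq' : (∫ ω, (∑ m : Fin 3 × Fin k × Fin n,
      ((if ((m.2.2 : Fin n) : ℕ) ≤ ((i : Fin n) : ℕ) then (1 : ℝ) else -1) * knSgn m.1)
        * (knF s e r e1 cu e2 cv (Sum.inl (knFam1 m.1, m.2.1, i - m.2.2)) ω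
            * knF s e r e1 cu e2 cv (Sum.inl (knFam2 m.1, m.2.1, m.2.2)) ω)) ^ 2 ∂P)
      = (k : ℝ) * n * (η₁ / 2 * (η₁ / 2)) + (k : ℝ) * n * (η₁ / 2 * (η₂ / 2))
          + (k : ℝ) * n * (η₁ / 2 * σu2) := by
    rw [hSsq]
    have hsgn : ∀ (j : Fin n) (v : ℝ),
        ((if (j : ℕ) ≤ (i : ℕ) then (1 : ℝ) else -1) * v) ^ 2 = v ^ 2 := by
      intro j v; split_ifs <;> ring
    rw [Fintype.sum_prod_type, Fin.sum_univ_three]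
    simp only [knFam1_0, knFam1_1, knFam1_2, knFam2_0, knFam2_1, knFam2_2,
      knSgn_0, knSgn_1, knSgn_2, knF_s, knF_e, knF_r, knF_e1, knF_cu, hsgn]
    have hvs : ∀ (t : Fin k) (j : Fin n), variance (s t j) P = η₁ / 2 := fun t j => (hvar t j).1
    have hve : ∀ (t : Fin k) (j : Fin n), variance (e t j) P = η₁ / 2 := fun t j => (hvar t j).2.1
    have hvr : ∀ (t : Fin k) (j : Fin n), variance (r t j) P = η₁ / 2 :=
      fun t j => (hvar t j).2.2.1
    have hve1 : ∀ (t : Fin k) (j : Fin n), variance (e1 t j) P = η₂ / 2 :=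
      fun t j => (hvar t j).2.2.2.1
    have hvcu : ∀ (t : Fin k) (j : Fin n), variance (cu t j) P = σu2 :=
      fun t j => (hvar t j).2.2.2.2
    simp only [hvs, hve, hvr, hve1, hvcu]
    simp only [Finset.sum_const, Finset.card_univ, Fintype.card_prod, Fintype.card_fin,
      nsmul_eq_mul, Nat.cast_mul]
    norm_num
  -- pointwise decomposition of the noise
  have hNdef : kyberNoise s e r e1 cu e2 cv i = fun ω =>
      (∑ m : Fin 3 × Fin k × Fin n,
        ((if ((m.2.2 : Fin n) : ℕ) ≤ ((i : Fin n) : ℕ) then (1 : ℝ) else -1) * knSgn m.1)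
          * (knF s e r e1 cu e2 cv (Sum.inl (knFam1 m.1, m.2.1, i - m.2.2)) ω
              * knF s e r e1 cu e2 cv (Sum.inl (knFam2 m.1, m.2.1, m.2.2)) ω))
        + (e2 i ω + cv i ω) := by
    funext ω
    simp only [kyberNoise, nconv]
    rw [Fintype.sum_prod_type, Fin.sum_univ_three]
    simp only [Fintype.sum_prod_type, knFam1_0, knFam1_1, knFam1_2, knFam2_0, knFam2_1,
      knFam2_2, knSgn_0, knSgn_1, knSgn_2, knF_s, knF_e, knF_r, knF_e1, knF_cu]
    have h1 : (∑ t : Fin k, ∑ j : Fin n,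
        ((if (j : ℕ) ≤ (i : ℕ) then (1 : ℝ) else -1) * 1) * (e t (i - j) ω * r t j ω))
        = ∑ t : Fin k, ∑ j : Fin n,
          (if (j : ℕ) ≤ (i : ℕ) then (1 : ℝ) else -1) * e t (i - j) ω * r t j ω :=
      Finset.sum_congr rfl fun t _ => Finset.sum_congr rfl fun j _ => by ring
    have h2 : (∑ t : Fin k, ∑ j : Fin n,
        ((if (j : ℕ) ≤ (i : ℕ) then (1 : ℝ) else -1) * -1) * (s t (i - j) ω * e1 t j ω))
        = -∑ t : Fin k, ∑ j : Fin n,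
          (if (j : ℕ) ≤ (i : ℕ) then (1 : ℝ) else -1) * (s t (i - j) ω * e1 t j ω) := by
      rw [← Finset.sum_neg_distrib]
      refine Finset.sum_congr rfl fun t _ => ?_
      rw [← Finset.sum_neg_distrib]
      exact Finset.sum_congr rfl fun j _ => by ring
    have h3 : (∑ t : Fin k, ∑ j : Fin n,
        ((if (j : ℕ) ≤ (i : ℕ) then (1 : ℝ) else -1) * -1) * (s t (i - j) ω * cu t j ω))
        = -∑ t : Fin k, ∑ j : Fin n,
          (if (j : ℕ) ≤ (i : ℕ) then (1 : ℝ) else -1) * (s t (i - j) ω * cu t j ω) := by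
      rw [← Finset.sum_neg_distrib]
      refine Finset.sum_congr rfl fun t _ => ?_
      rw [← Finset.sum_neg_distrib]
      exact Finset.sum_congr rfl fun j _ => by ring
    have h4 : (∑ t : Fin k, ∑ j : Fin n,
        (if (j : ℕ) ≤ (i : ℕ) then (1 : ℝ) else -1) * s t (i - j) ω * (e1 t j ω + cu t j ω))
        = (∑ t : Fin k, ∑ j : Fin n,
            (if (j : ℕ) ≤ (i : ℕ) then (1 : ℝ) else -1) * (s t (i - j) ω * e1 t j ω))
          + ∑ t : Fin k, ∑ j : Fin n,
            (if (j : ℕ) ≤ (i : ℕ) then (1 : ℝ) else -1) * (s t (i - j) ω * cu t j ω) := by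
      rw [← Finset.sum_add_distrib]
      refine Finset.sum_congr rfl fun t _ => ?_
      rw [← Finset.sum_add_distrib]
      exact Finset.sum_congr rfl fun j _ => by ring
    rw [h1, h2, h3, h4]
    ring
  obtain ⟨hm, hv⟩ := kn_total _ (e2 i) (cv i) hSL2 (hL2' i).1 (hL2' i).2
    hSmean (hmean' i).1 (hmean' i).2 hcross_e2 hcross_cv hpe2cv
  constructor
  · rw [hNdef]; exact hm
  · rw [hNdef, hv, hSsq', hpe2, hpcv]
    push_cast
    ring
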